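/- For every positive integer d, the number of additive subgroups of ℤ × ℤ of index d is equal to σ₁(d). -/

import Mathlib

/-- σ_k(d): the sum of the k-th powers of the positive divisors of d. -/
def sigma (k d : ℕ) : ℕ := ∑ e ∈ d.divisors, e ^ k

open AddSubgroup

/-- The lattice generated by `(a,c)` and `(0,b)`. -/
def lat (a b c : ℤ) : AddSubgroup (ℤ × ℤ) where
  carrier := {p | ∃ m n : ℤ, p = (m * a, m * c + n * b)}
  zero_mem' := ⟨0, 0, by simp; rfl⟩
  add_mem' := by
    rintro p q ⟨m, n, rfl⟩ ⟨m', n', rfl⟩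
    exact ⟨m + m', n + n', by simp [Prod.ext_iff]; constructor <;> ring⟩
  neg_mem' := by
    rintro p ⟨m, n, rfl⟩
    exact ⟨-m, -n, by simp [Prod.ext_iff]; ring⟩

lemma mem_lat {a b c : ℤ} {p : ℤ × ℤ} :
    p ∈ lat a b c ↔ ∃ m n : ℤ, p = (m * a, m * c + n * b) := Iff.rfl

lemma lat_map_fst (a b c : ℤ) :
    (lat a b c).map (AddMonoidHom.fst ℤ ℤ) = zmultiples a := by
  ext x
  simp only [AddSubgroup.mem_map, mem_lat]
  constructor
  · rintro ⟨p, ⟨m, n, rfl⟩, rfl⟩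
    exact ⟨m, by simp [zsmul_eq_mul]⟩
  · rintro ⟨m, rfl⟩
    exact ⟨(m * a, m * c + 0 * b), ⟨m, 0, rfl⟩, by simp [zsmul_eq_mul]⟩

lemma lat_comap_inr (a b c : ℤ) (ha : a ≠ 0) :
    (lat a b c).comap (AddMonoidHom.inr ℤ ℤ) = zmultiples b := by
  ext y
  simp only [AddSubgroup.mem_comap, AddMonoidHom.inr_apply, mem_lat, Prod.ext_iff]
  constructor
  · rintro ⟨m, n, h1, h2⟩
    have hm : m = 0 := by
      rcases mul_eq_zero.mp h1.symm with h | h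
      · exact h
      · exact absurd h ha
    subst hm
    exact ⟨n, by simpa [zsmul_eq_mul] using h2.symm⟩
  · rintro ⟨n, rfl⟩
    exact ⟨0, n, by simp [zsmul_eq_mul]⟩

lemma inr_range_eq_fst_ker :
    (AddMonoidHom.inr ℤ ℤ).range = (AddMonoidHom.fst ℤ ℤ).ker := by
  ext ⟨x, y⟩
  simp [AddMonoidHom.mem_ker, Prod.ext_iff, eq_comm, AddSubgroup.mem_prod]

lemma index_prod (H : AddSubgroup (ℤ × ℤ)) :
    (H.comap (AddMonoidHom.inr ℤ ℤ)).index * (H.map (AddMonoidHom.fst ℤ ℤ)).index = H.index := by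
  have h1 : (H.comap (AddMonoidHom.inr ℤ ℤ)).index
      = H.relIndex (H ⊔ (AddMonoidHom.inr ℤ ℤ).range) := by
    rw [AddSubgroup.index_comap, AddSubgroup.relIndex_sup_left]
  have h3 : (H ⊔ (AddMonoidHom.inr ℤ ℤ).range).index
      = (H.map (AddMonoidHom.fst ℤ ℤ)).index := by
    rw [inr_range_eq_fst_ker, ← AddSubgroup.comap_map_eq,
      AddSubgroup.index_comap_of_surjective _ Prod.fst_surjective]
  rw [h1, ← h3]
  exact AddSubgroup.relIndex_mul_index le_sup_left

lemma lat_index (a b c : ℤ) (ha : a ≠ 0) :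
    (lat a b c).index = a.natAbs * b.natAbs := by
  rw [← index_prod, lat_map_fst, lat_comap_inr a b c ha, Int.index_zmultiples,
    Int.index_zmultiples, mul_comm]

lemma cyclic' (B : AddSubgroup ℤ) : ∃ a : ℤ, 0 ≤ a ∧ B = AddSubgroup.zmultiples a := by
  obtain ⟨a, ha⟩ := Int.subgroup_cyclic B
  refine ⟨(a.natAbs : ℤ), Int.natCast_nonneg _, ?_⟩
  rw [ha, ← AddSubgroup.zmultiples_eq_closure]
  ext x
  simp [Int.mem_zmultiples_iff, Int.natAbs_dvd]

lemma eq_lat (H : AddSubgroup (ℤ × ℤ)) (h : H.index ≠ 0) :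
    ∃ a b c : ℤ, 0 < a ∧ 0 < b ∧ 0 ≤ c ∧ c < b ∧ H = lat a b c := by
  obtain ⟨a, ha0, hA⟩ := cyclic' (H.map (AddMonoidHom.fst ℤ ℤ))
  obtain ⟨b, hb0, hB⟩ := cyclic' (H.comap (AddMonoidHom.inr ℤ ℤ))
  have hprod := index_prod H
  rw [hA, hB, Int.index_zmultiples, Int.index_zmultiples] at hprod
  have ha : 0 < a := by
    rcases ha0.lt_or_eq with h' | h'
    · exact h'
    · exfalso; apply h; rw [← hprod, ← h']; simp
  have hb : 0 < b := by
    rcases hb0.lt_or_eq with h' | h'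
    · exact h'
    · exfalso; apply h; rw [← hprod, ← h']; simp
  have key : ∀ y : ℤ, (0, y) ∈ H ↔ b ∣ y := by
    intro y
    have : y ∈ H.comap (AddMonoidHom.inr ℤ ℤ) ↔ y ∈ AddSubgroup.zmultiples b := by rw [hB]
    simpa [Int.mem_zmultiples_iff] using this
  have haH : a ∈ H.map (AddMonoidHom.fst ℤ ℤ) := by
    rw [hA]; exact AddSubgroup.mem_zmultiples a
  obtain ⟨p, hp, hpa⟩ := haH
  set c₀ := p.2 with hc₀
  have hpeq : p = (a, c₀) := Prod.ext hpa rfl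
  set c := c₀ % b with hc
  have hcnn : 0 ≤ c := Int.emod_nonneg _ hb.ne'
  have hclt : c < b := Int.emod_lt_of_pos _ hb
  have hsub : b ∣ c₀ - c := ⟨c₀ / b, by rw [hc, Int.emod_def]; ring⟩
  have hacH : (a, c) ∈ H := by
    have h2 : ((0 : ℤ), c₀ - c) ∈ H := (key _).mpr hsub
    have := H.sub_mem hp h2
    simpa [hpeq, Prod.ext_iff] using this
  refine ⟨a, b, c, ha, hb, hcnn, hclt, ?_⟩
  ext q
  constructor
  · intro hq
    have hq1 : q.1 ∈ AddSubgroup.zmultiples a := by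
      rw [← hA]; exact ⟨q, hq, rfl⟩
    obtain ⟨m, hm⟩ := hq1
    simp only [zsmul_eq_mul] at hm
    have h2 : q - m • (a, c) ∈ H := H.sub_mem hq (H.zsmul_mem hacH m)
    have h2' : ((0 : ℤ), q.2 - m * c) ∈ H := by
      have : q - m • (a, c) = (q.1 - m * a, q.2 - m * c) := by
        simp [Prod.ext_iff, zsmul_eq_mul]
      rw [this, ← hm] at h2
      simpa using h2
    obtain ⟨n, hn⟩ := (key _).mp h2'
    exact ⟨m, n, Prod.ext hm.symm (by simp; linarith)⟩
  · rintro ⟨m, n, rfl⟩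
    have h1 : ((0 : ℤ), b) ∈ H := (key _).mpr dvd_rfl
    have : (m * a, m * c + n * b) = m • ((a : ℤ), c) + n • ((0 : ℤ), b) := by
      simp [Prod.ext_iff, zsmul_eq_mul]
    rw [this]
    exact H.add_mem (H.zsmul_mem hacH m) (H.zsmul_mem h1 n)

lemma lat_inj {a b c a' b' c' : ℤ} (ha : 0 < a) (hb : 0 < b) (hc : 0 ≤ c) (hcb : c < b)
    (ha' : 0 < a') (hb' : 0 < b') (hc' : 0 ≤ c') (hcb' : c' < b')
    (h : lat a b c = lat a' b' c') : a = a' ∧ b = b' ∧ c = c' := by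
  have hA : AddSubgroup.zmultiples a = AddSubgroup.zmultiples a' := by
    rw [← lat_map_fst a b c, ← lat_map_fst a' b' c', h]
  have hB : AddSubgroup.zmultiples b = AddSubgroup.zmultiples b' := by
    rw [← lat_comap_inr a b c ha.ne', ← lat_comap_inr a' b' c' ha'.ne', h]
  have haa : a = a' := by
    apply Int.dvd_antisymm ha.le ha'.le
    · rw [← Int.mem_zmultiples_iff, hA]; exact AddSubgroup.mem_zmultiples a'
    · rw [← Int.mem_zmultiples_iff, ← hA]; exact AddSubgroup.mem_zmultiples a
  have hbb : b = b' := by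
    apply Int.dvd_antisymm hb.le hb'.le
    · rw [← Int.mem_zmultiples_iff, hB]; exact AddSubgroup.mem_zmultiples b'
    · rw [← Int.mem_zmultiples_iff, ← hB]; exact AddSubgroup.mem_zmultiples b
  subst haa; subst hbb
  have hmem : ((a : ℤ), c') ∈ lat a b c := by
    rw [h]; exact ⟨1, 0, by simp⟩
  obtain ⟨m, n, hmn⟩ := hmem
  rw [Prod.mk.injEq] at hmn
  obtain ⟨h1, h2⟩ := hmn
  have hm1 : m = 1 := by
    have : (m - 1) * a = 0 := by linarith
    rcases mul_eq_zero.mp this with h' | h'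
    · linarith
    · exact absurd h' ha.ne'
  subst hm1
  have hn0 : n = 0 := by
    rcases lt_trichotomy n 0 with h' | h' | h'
    · have : n * b ≤ -b := by nlinarith
      linarith
    · exact h'
    · have : b ≤ n * b := by nlinarith
      linarith
  subst hn0
  refine ⟨rfl, rfl, by linarith⟩

theorem count_index_d_subgroups (d : ℕ) (hd : 0 < d) :
    Nat.card {H : AddSubgroup (ℤ × ℤ) // Nat.card ((ℤ × ℤ) ⧸ H) = d} = sigma 1 d := by
  classical
  -- the parameter type
  let T := (x : {b : ℕ // b ∈ d.divisors}) × Fin x.1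
  let f : T → {H : AddSubgroup (ℤ × ℤ) // Nat.card ((ℤ × ℤ) ⧸ H) = d} := fun s =>
    ⟨lat ((d / s.1.1 : ℕ) : ℤ) ((s.1.1 : ℕ) : ℤ) ((s.2.1 : ℕ) : ℤ), by
      obtain ⟨⟨b, hb⟩, c⟩ := s
      obtain ⟨hbd, hd0⟩ := Nat.mem_divisors.mp hb
      have hb0 : 0 < b := Nat.pos_of_mem_divisors hb
      have ha0 : 0 < d / b := Nat.div_pos (Nat.le_of_dvd hd hbd) hb0
      rw [← AddSubgroup.index_eq_card, lat_index _ _ _ (by exact_mod_cast ha0.ne')]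
      simp only [Int.natAbs_natCast]
      exact Nat.div_mul_cancel hbd⟩
  have hbij : Function.Bijective f := by
    constructor
    · rintro ⟨⟨b, hb⟩, c⟩ ⟨⟨b', hb'⟩, c'⟩ hst
      have heq : lat ((d / b : ℕ) : ℤ) ((b : ℕ) : ℤ) ((c.1 : ℕ) : ℤ)
          = lat ((d / b' : ℕ) : ℤ) ((b' : ℕ) : ℤ) ((c'.1 : ℕ) : ℤ) := congrArg Subtype.val hst
      have hb0 : 0 < b := Nat.pos_of_mem_divisors hb
      have hb0' : 0 < b' := Nat.pos_of_mem_divisors hb'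
      have ha0 : 0 < d / b :=
        Nat.div_pos (Nat.le_of_dvd hd (Nat.mem_divisors.mp hb).1) hb0
      have ha0' : 0 < d / b' :=
        Nat.div_pos (Nat.le_of_dvd hd (Nat.mem_divisors.mp hb').1) hb0'
      obtain ⟨h1, h2, h3⟩ := lat_inj (by exact_mod_cast ha0) (by exact_mod_cast hb0)
        (by positivity) (by exact_mod_cast c.2) (by exact_mod_cast ha0')
        (by exact_mod_cast hb0') (by positivity) (by exact_mod_cast c'.2) heq
      have hbb : b = b' := by exact_mod_cast h2
      subst hbb
      have hcc : c = c' := Fin.ext (by exact_mod_cast h3)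
      subst hcc
      rfl
    · rintro ⟨H, hH⟩
      have hidx : H.index = d := by rw [AddSubgroup.index_eq_card]; exact hH
      obtain ⟨a, b, c, ha, hb, hc, hcb, hHeq⟩ := eq_lat H (by omega)
      have hd' : d = a.natAbs * b.natAbs := by
        rw [← hidx, hHeq, lat_index _ _ _ ha.ne']
      have hbd : b.natAbs ∈ d.divisors :=
        Nat.mem_divisors.mpr ⟨Dvd.intro_left _ hd'.symm, hd.ne'⟩
      have hcb' : c.natAbs < b.natAbs := by omega
      refine ⟨⟨⟨b.natAbs, hbd⟩, ⟨c.natAbs, hcb'⟩⟩, ?_⟩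
      apply Subtype.ext
      have e1 : ((d / b.natAbs : ℕ) : ℤ) = a := by
        have h5 : d / b.natAbs = a.natAbs := by
          rw [hd']; exact Nat.mul_div_cancel _ (by omega)
        rw [h5, Int.natAbs_of_nonneg ha.le]
      have e2 : ((b.natAbs : ℕ) : ℤ) = b := Int.natAbs_of_nonneg hb.le
      have e3 : ((c.natAbs : ℕ) : ℤ) = c := Int.natAbs_of_nonneg hc
      show lat _ _ _ = H
      rw [e1, e2, e3, hHeq]
  rw [← Nat.card_eq_of_bijective f hbij]
  have : Nat.card T = ∑ x : {b : ℕ // b ∈ d.divisors}, (x.1 : ℕ) := by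
    rw [Nat.card_eq_fintype_card, Fintype.card_sigma]
    simp
  rw [this, sigma]
  rw [Finset.sum_coe_sort d.divisors (fun b => b)]
  simp [pow_one]
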